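/- Let m ≥ 0 and n, r ≥ 1 be integers. Then (1/(r!·n^r)) · Σ_{σ ∈ W(n,r)} |Fix(σ)|^m = Σ_{i=0}^{min(m,r)} S(m,i) · n^{m−i}. -/

import Mathlib

open Finset

/-- Stirling numbers of the second kind. -/
def stirling2 : ℕ → ℕ → ℕ
  | 0, 0 => 1
  | 0, _ + 1 => 0
  | _ + 1, 0 => 0
  | m + 1, i + 1 => (i + 1) * stirling2 m (i + 1) + stirling2 m i

-- count of functions Fin m → Fin r with image of size i
def Ncnt (r m i : ℕ) : ℕ :=
  ((univ : Finset (Fin m → Fin r)).filter (fun t => (Finset.image t univ).card = i)).card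

lemma image_cons {m r : ℕ} (v : Fin r) (g : Fin m → Fin r) :
    Finset.image (Fin.cons v g : Fin (m + 1) → Fin r) univ
      = insert v (Finset.image g univ) := by
  ext x
  simp only [mem_image, mem_insert, mem_univ, true_and]
  constructor
  · rintro ⟨j, hj⟩
    induction j using Fin.cases with
    | zero => exact Or.inl (by simpa using hj.symm)
    | succ j => exact Or.inr ⟨j, by simpa using hj⟩
  · rintro (rfl | ⟨a, rfl⟩)
    · exact ⟨0, rfl⟩
    · exact ⟨a.succ, rfl⟩

lemma Ncnt_zero_zero (r : ℕ) : Ncnt r 0 0 = 1 := by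
  simp [Ncnt, Finset.filter_true_of_mem, Finset.univ_eq_empty (α := Fin 0)]

lemma Ncnt_zero_succ (r i : ℕ) : Ncnt r 0 (i + 1) = 0 := by
  simp [Ncnt, Finset.univ_eq_empty (α := Fin 0)]

lemma Ncnt_succ_zero (r m : ℕ) : Ncnt r (m + 1) 0 = 0 := by
  rw [Ncnt, Finset.card_eq_zero, Finset.filter_eq_empty_iff]
  intro t _
  simp only [Finset.card_eq_zero, Finset.image_eq_empty]
  simp [← Finset.nonempty_iff_ne_empty]

lemma Ncnt_succ (r m i : ℕ) :
    Ncnt r (m + 1) (i + 1) = (i + 1) * Ncnt r m (i + 1) + (r - i) * Ncnt r m i := by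
  have h1 : Ncnt r (m + 1) (i + 1)
      = ((univ : Finset (Fin r × (Fin m → Fin r))).filter
          (fun p => (Finset.image (Fin.cons p.1 p.2 : Fin (m+1) → Fin r) univ).card = i + 1)).card := by
    have hcons : ∀ t : Fin (m+1) → Fin r, (Fin.cons (t 0) fun j => t j.succ) = t :=
      fun t => funext (Fin.cases rfl fun j => rfl)
    apply Finset.card_nbij' (i := fun t => (t 0, fun j => t j.succ))
      (j := fun p => Fin.cons p.1 p.2)
    · intro t ht
      simp only [mem_coe, mem_filter, mem_univ, true_and] at ht ⊢
      rwa [hcons t]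
    · intro p hp
      simp only [mem_coe, mem_filter, mem_univ, true_and] at hp ⊢
      exact hp
    · intro t _
      exact hcons t
    · intro p _
      simp
  rw [h1, Finset.card_filter, Fintype.sum_prod_type, Finset.sum_comm]
  have h2 : ∀ g : Fin m → Fin r,
      (∑ v : Fin r, if (Finset.image (Fin.cons v g : Fin (m+1) → Fin r) univ).card = i + 1 then 1 else 0)
      = (if (Finset.image g univ).card = i + 1 then (Finset.image g univ).card else 0)
        + (if (Finset.image g univ).card = i then r - (Finset.image g univ).card else 0) := by
    intro g
    set s := Finset.image g univ with hs
    rw [← Finset.sum_add_sum_compl s]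
    congr 1
    · rw [Finset.sum_congr rfl (fun v hv => by
        rw [image_cons, Finset.insert_eq_self.2 hv]), Finset.sum_const, smul_eq_mul, mul_ite,
        mul_one, mul_zero]
    · rw [Finset.sum_congr rfl (fun v hv => by
        rw [image_cons, Finset.card_insert_of_notMem (Finset.mem_compl.1 hv)]), Finset.sum_const,
        smul_eq_mul, mul_ite, mul_one, mul_zero]
      have : s.card ≤ r := by
        simpa using Finset.card_le_card (Finset.subset_univ s)
      rw [Finset.card_compl, Fintype.card_fin]
      congr 1
      simp only [Nat.add_right_cancel_iff]
  rw [Finset.sum_congr rfl (fun g _ => h2 g), Finset.sum_add_distrib]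
  congr 1
  · rw [← Finset.sum_filter]
    have : ∀ g ∈ (univ : Finset (Fin m → Fin r)).filter
        (fun g => (Finset.image g univ).card = i + 1), (Finset.image g univ).card = i + 1 :=
      fun g hg => (Finset.mem_filter.1 hg).2
    rw [Finset.sum_congr rfl this, Finset.sum_const, smul_eq_mul, Ncnt, mul_comm]
  · rw [← Finset.sum_filter]
    have : ∀ g ∈ (univ : Finset (Fin m → Fin r)).filter
        (fun g => (Finset.image g univ).card = i), r - (Finset.image g univ).card = r - i :=
      fun g hg => by rw [(Finset.mem_filter.1 hg).2]
    rw [Finset.sum_congr rfl this, Finset.sum_const, smul_eq_mul, Ncnt, mul_comm]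

lemma Ncnt_closed (r : ℕ) : ∀ m i, i ≤ r → Ncnt r m i * (r - i).factorial = stirling2 m i * r.factorial := by
  intro m
  induction m with
  | zero =>
    intro i hi
    match i with
    | 0 => simp [Ncnt_zero_zero, stirling2]
    | j + 1 => simp [Ncnt_zero_succ, stirling2]
  | succ m ih =>
    intro i hi
    match i with
    | 0 => simp [Ncnt_succ_zero, stirling2]
    | j + 1 =>
      have hj : j ≤ r := Nat.le_of_succ_le hi
      have hfac : (r - j).factorial = (r - j) * (r - (j+1)).factorial := by
        have : r - j = (r - (j+1)) + 1 := by omega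
        rw [this, Nat.factorial_succ]
      calc Ncnt r (m+1) (j+1) * (r - (j+1)).factorial
          = ((j+1) * Ncnt r m (j+1) + (r - j) * Ncnt r m j) * (r - (j+1)).factorial := by
            rw [Ncnt_succ]
        _ = (j+1) * (Ncnt r m (j+1) * (r - (j+1)).factorial)
            + Ncnt r m j * ((r - j) * (r - (j+1)).factorial) := by ring
        _ = (j+1) * (stirling2 m (j+1) * r.factorial) + stirling2 m j * r.factorial := by
            rw [ih (j+1) hi, ← hfac, ih j hj]
        _ = stirling2 (m+1) (j+1) * r.factorial := by
            show _ = ((j + 1) * stirling2 m (j + 1) + stirling2 m j) * r.factorial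
            ring

lemma card_perm_fix (r : ℕ) (s : Finset (Fin r)) :
    ((univ : Finset (Equiv.Perm (Fin r))).filter (fun π => ∀ i ∈ s, π i = i)).card
      = (r - s.card).factorial := by
  rw [← Fintype.card_subtype]
  have e1 : {π : Equiv.Perm (Fin r) // ∀ i ∈ s, π i = i}
      ≃ {π : Equiv.Perm (Fin r) // ∀ a, ¬(a ∉ s) → π a = a} :=
    Equiv.subtypeEquivRight (fun π => by
      constructor
      · intro h a ha
        exact h a (not_not.1 ha)
      · intro h a ha
        exact h a (not_not.2 ha))
  have e2 : {π : Equiv.Perm (Fin r) // ∀ a, ¬(a ∉ s) → π a = a}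
      ≃ Equiv.Perm {a : Fin r // a ∉ s} :=
    (Equiv.Perm.subtypeEquivSubtypePerm (fun a => a ∉ s)).symm
  rw [Fintype.card_congr (e1.trans e2), Fintype.card_perm]
  congr 1
  rw [Fintype.card_subtype_compl, Fintype.card_fin]
  congr 1
  exact Fintype.card_coe s

lemma card_fun_zero (n r : ℕ) [NeZero n] (s : Finset (Fin r)) :
    ((univ : Finset (Fin r → ZMod n)).filter (fun ζ => ∀ i ∈ s, ζ i = 0)).card
      = n ^ (r - s.card) := by
  rw [← Fintype.card_subtype]
  have e : {ζ : Fin r → ZMod n // ∀ i ∈ s, ζ i = 0} ≃ ({a : Fin r // a ∉ s} → ZMod n) :=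
    { toFun := fun ζ a => ζ.1 a.1
      invFun := fun h => ⟨fun i => if hi : i ∈ s then 0 else h ⟨i, hi⟩, fun i hi => by simp [hi]⟩
      left_inv := fun ζ => by
        apply Subtype.ext
        funext i
        by_cases hi : i ∈ s
        · simp [hi, ζ.2 i hi]
        · simp [hi]
      right_inv := fun h => by
        funext a
        simp [a.2] }
  rw [Fintype.card_congr e, Fintype.card_fun, ZMod.card]
  congr 1
  rw [Fintype.card_subtype_compl, Fintype.card_fin]
  congr 1
  exact Fintype.card_coe s

/-- The action of an element of the wreath product `C_n ≀ S_r`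
(encoded as a pair in `(Fin r → ZMod n) × Equiv.Perm (Fin r)`)
on `B(n,r) = ZMod n × Fin r`. -/
def wAct (n r : ℕ) (σ : (Fin r → ZMod n) × Equiv.Perm (Fin r)) :
    ZMod n × Fin r → ZMod n × Fin r :=
  fun p => (σ.1 p.2 + p.1, σ.2 p.2)

/-- The number of fixed points of `σ ∈ C_n ≀ S_r` acting on `B(n,r)`. -/
noncomputable def fixCount (n r : ℕ) (σ : (Fin r → ZMod n) × Equiv.Perm (Fin r)) : ℕ :=
  Nat.card {p : ZMod n × Fin r // wAct n r σ p = p}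

lemma fixCount_eq (n r : ℕ) [NeZero n] (σ : (Fin r → ZMod n) × Equiv.Perm (Fin r)) :
    fixCount n r σ
      = n * ((univ : Finset (Fin r)).filter (fun i => σ.2 i = i ∧ σ.1 i = 0)).card := by
  rw [fixCount, Nat.card_eq_fintype_card]
  have h1 : ∀ p : ZMod n × Fin r, wAct n r σ p = p ↔ (σ.2 p.2 = p.2 ∧ σ.1 p.2 = 0) := by
    intro p
    rw [wAct, Prod.ext_iff]
    constructor
    · rintro ⟨h1, h2⟩
      exact ⟨h2, by rwa [add_eq_right] at h1⟩
    · rintro ⟨h1, h2⟩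
      exact ⟨by rw [h2, zero_add], h1⟩
  have e : {p : ZMod n × Fin r // wAct n r σ p = p}
      ≃ ZMod n × {i : Fin r // σ.2 i = i ∧ σ.1 i = 0} :=
    { toFun := fun p => (p.1.1, ⟨p.1.2, (h1 p.1).1 p.2⟩)
      invFun := fun q => ⟨(q.1, q.2.1), (h1 (q.1, q.2.1)).2 q.2.2⟩
      left_inv := fun p => rfl
      right_inv := fun q => rfl }
  rw [Fintype.card_congr e, Fintype.card_prod, ZMod.card, Fintype.card_subtype]

lemma key (m n r : ℕ) [NeZero n] :
    ∑ σ : (Fin r → ZMod n) × Equiv.Perm (Fin r), fixCount n r σ ^ m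
      = (∑ i ∈ Finset.range (min m r + 1), stirling2 m i * n ^ (m - i))
          * (r.factorial * n ^ r) := by
  classical
  -- Step A: pull out n^m
  have hA : ∑ σ : (Fin r → ZMod n) × Equiv.Perm (Fin r), fixCount n r σ ^ m
      = n ^ m * ∑ σ : (Fin r → ZMod n) × Equiv.Perm (Fin r),
          (((univ : Finset (Fin r)).filter (fun i => σ.2 i = i ∧ σ.1 i = 0)).card) ^ m := by
    rw [Finset.mul_sum]
    exact Finset.sum_congr rfl fun σ _ => by rw [fixCount_eq, mul_pow]
  -- Step B: expand card ^ m as a sum over tuples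
  have hB : ∀ σ : (Fin r → ZMod n) × Equiv.Perm (Fin r),
      (((univ : Finset (Fin r)).filter (fun i => σ.2 i = i ∧ σ.1 i = 0)).card) ^ m
      = ∑ t : Fin m → Fin r,
          if (∀ i ∈ Finset.image t univ, σ.2 i = i ∧ σ.1 i = 0) then 1 else 0 := by
    intro σ
    set G := (univ : Finset (Fin r)).filter (fun i => σ.2 i = i ∧ σ.1 i = 0) with hG
    have h2 : (Fintype.piFinset fun _ : Fin m => G)
        = (univ : Finset (Fin m → Fin r)).filter (fun t => ∀ i ∈ Finset.image t univ, σ.2 i = i ∧ σ.1 i = 0) := by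
      ext t
      simp [Fintype.mem_piFinset, hG]
    have h3 := Fintype.card_piFinset (fun _ : Fin m => G)
    rw [h2] at h3
    rw [← Finset.card_filter, h3, Finset.prod_const, Finset.card_univ, Fintype.card_fin]
  -- Step C+D: swap and count
  have hD : ∀ t : Fin m → Fin r,
      (∑ σ : (Fin r → ZMod n) × Equiv.Perm (Fin r),
        if (∀ i ∈ Finset.image t univ, σ.2 i = i ∧ σ.1 i = 0) then 1 else 0)
      = n ^ (r - (Finset.image t univ).card) * (r - (Finset.image t univ).card).factorial := by
    intro t
    set s := Finset.image t univ with hs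
    rw [← Finset.card_filter]
    have hsplit : ((univ : Finset ((Fin r → ZMod n) × Equiv.Perm (Fin r))).filter
        (fun σ => ∀ i ∈ s, σ.2 i = i ∧ σ.1 i = 0))
        = ((univ : Finset (Fin r → ZMod n)).filter (fun ζ => ∀ i ∈ s, ζ i = 0)) ×ˢ
          ((univ : Finset (Equiv.Perm (Fin r))).filter (fun π => ∀ i ∈ s, π i = i)) := by
      rw [← Finset.univ_product_univ, ← Finset.filter_product]
      apply Finset.filter_congr
      intro σ _
      simp only [forall_and]
      tauto
    rw [hsplit, Finset.card_product, card_fun_zero, card_perm_fix]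
  calc ∑ σ : (Fin r → ZMod n) × Equiv.Perm (Fin r), fixCount n r σ ^ m
      = n ^ m * ∑ σ : (Fin r → ZMod n) × Equiv.Perm (Fin r),
          ∑ t : Fin m → Fin r,
            if (∀ i ∈ Finset.image t univ, σ.2 i = i ∧ σ.1 i = 0) then 1 else 0 := by
        rw [hA]
        congr 1
        exact Finset.sum_congr rfl fun σ _ => hB σ
    _ = n ^ m * ∑ t : Fin m → Fin r,
          n ^ (r - (Finset.image t univ).card) * (r - (Finset.image t univ).card).factorial := by
        rw [Finset.sum_comm]
        congr 1
        exact Finset.sum_congr rfl fun t _ => hD t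
    _ = (∑ i ∈ Finset.range (min m r + 1), stirling2 m i * n ^ (m - i))
          * (r.factorial * n ^ r) := by
        have himg : (univ : Finset (Fin m → Fin r)).image (fun t => (Finset.image t univ).card)
            ⊆ Finset.range (min m r + 1) := by
          intro b hb
          rw [Finset.mem_image] at hb
          obtain ⟨t, _, rfl⟩ := hb
          rw [Finset.mem_range]
          have h1 : (Finset.image t univ).card ≤ m :=
            le_trans Finset.card_image_le (by simp)
          have h2 : (Finset.image t univ).card ≤ r := by
            simpa using Finset.card_le_card (Finset.subset_univ (Finset.image t univ))
          omega
        rw [Finset.sum_comp (fun b => n ^ (r - b) * (r - b).factorial)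
            (fun t => (Finset.image t univ).card),
          Finset.sum_subset himg (by
            intro b _ hb
            have hemp : ((univ : Finset (Fin m → Fin r)).filter
                (fun t => (Finset.image t univ).card = b)) = ∅ := by
              rw [Finset.filter_eq_empty_iff]
              intro t _ h
              exact hb (Finset.mem_image.2 ⟨t, Finset.mem_univ t, h⟩)
            rw [hemp]
            simp),
          Finset.mul_sum, Finset.sum_mul]
        apply Finset.sum_congr rfl
        intro i hi
        rw [Finset.mem_range] at hi
        have hir : i ≤ r := by omega
        have hN := Ncnt_closed r m i hir
        show n ^ m * (Ncnt r m i • (n ^ (r - i) * (r - i).factorial))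
            = stirling2 m i * n ^ (m - i) * (r.factorial * n ^ r)
        rw [smul_eq_mul]
        have hpow : n ^ m * n ^ (r - i) = n ^ (m - i) * n ^ r := by
          rw [← pow_add, ← pow_add]
          congr 1
          omega
        calc n ^ m * (Ncnt r m i * (n ^ (r - i) * (r - i).factorial))
            = (Ncnt r m i * (r - i).factorial) * (n ^ m * n ^ (r - i)) := by ring
          _ = (stirling2 m i * r.factorial) * (n ^ (m - i) * n ^ r) := by rw [hN, hpow]
          _ = stirling2 m i * n ^ (m - i) * (r.factorial * n ^ r) := by ring

theorem stmt1 (m n r : ℕ) [NeZero n] (hr : 1 ≤ r) :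
    (1 / ((r.factorial * n ^ r : ℕ) : ℝ)) *
      ∑ σ : (Fin r → ZMod n) × Equiv.Perm (Fin r), ((fixCount n r σ : ℝ)) ^ m
      = ∑ i ∈ Finset.range (min m r + 1), (stirling2 m i : ℝ) * (n : ℝ) ^ (m - i) := by
  have hD : ((r.factorial * n ^ r : ℕ) : ℝ) ≠ 0 := by
    have h1 : r.factorial * n ^ r ≠ 0 :=
      Nat.mul_ne_zero (Nat.factorial_ne_zero r) (pow_ne_zero r (NeZero.ne n))
    exact_mod_cast h1
  have hsum : ∑ σ : (Fin r → ZMod n) × Equiv.Perm (Fin r), ((fixCount n r σ : ℝ)) ^ m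
      = ((∑ σ : (Fin r → ZMod n) × Equiv.Perm (Fin r), fixCount n r σ ^ m : ℕ) : ℝ) := by
    push_cast
    rfl
  rw [hsum, key m n r]
  push_cast
  field_simp
  rw [mul_div_cancel_left₀ _ (pow_ne_zero r (Nat.cast_ne_zero.2 (NeZero.ne n)))]
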